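/- Let W be a semiring, W₀ an ideal of W, and define b₁ ⪯ b₂ iff b₂ = b₁ + y for some y ∈ W₀. Let A be a sub-semiring of W contained in the center of W, and let {b_i}_{i ∈ I} ⊆ W be a (⪯)-base of W over A, meaning: (span) for every w ∈ W there exist coefficients a_i ∈ A, all but finitely many zero, with Σ_i a_i b_i ⪯ w; (independence) whenever Σ_i a_i b_i ⪯ Σ_i a'_i b_i with a_i, a'_i ∈ A all but finitely many zero, then a_i ⪯ a'_i for every i. If H is a sub-semiring of A such that {b_i} still (⪯)-spans W over H (for every w ∈ W there exist h_i ∈ H, all but finitely many zero, with Σ_i h_i b_i ⪯ w), then for every c ∈ A there exists h ∈ H with h ⪯ c. -/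

import Mathlib

/-- The surpassing relation associated to an ideal `W₀`:
`b₁ ⪯ b₂` iff `b₂ = b₁ + y` for some `y ∈ W₀`. -/
def surp {W : Type*} [Semiring W] (W₀ : AddSubmonoid W) (b₁ b₂ : W) : Prop :=
  ∃ y ∈ W₀, b₂ = b₁ + y

/-- If `{b_i}` is a `(⪯)`-base of `W` over a central sub-semiring `A`,
and `{b_i}` still `(⪯)`-spans `W` over a sub-semiring `H ⊆ A`, then every
element of `A` is surpassed from below by an element of `H`. -/
theorem base_spans_implies_dominates {W : Type*} [Semiring W] {ι : Type*}
    (W₀ : AddSubmonoid W)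
    (hW₀l : ∀ w y : W, y ∈ W₀ → w * y ∈ W₀)
    (hW₀r : ∀ w y : W, y ∈ W₀ → y * w ∈ W₀)
    (A : Subsemiring W) (hAcentral : ∀ a ∈ A, ∀ w : W, a * w = w * a)
    (b : ι → W)
    (hspan : ∀ w : W, ∃ f : ι →₀ W, (∀ i, f i ∈ A) ∧
      surp W₀ (f.sum fun i c => c * b i) w)
    (hindep : ∀ f g : ι →₀ W, (∀ i, f i ∈ A) → (∀ i, g i ∈ A) →
      surp W₀ (f.sum fun i c => c * b i) (g.sum fun i c => c * b i) →
      ∀ i, surp W₀ (f i) (g i))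
    (H : Subsemiring W) (hHA : H ≤ A)
    (hHspan : ∀ w : W, ∃ f : ι →₀ W, (∀ i, f i ∈ H) ∧
      surp W₀ (f.sum fun i c => c * b i) w) :
    ∀ c ∈ A, ∃ h ∈ H, surp W₀ h c := by
  intro c hc
  rcases isEmpty_or_nonempty ι with hι | hι
  · obtain ⟨f, _, hsurp⟩ := hHspan c
    have hf0 : f = 0 := Subsingleton.elim f 0
    refine ⟨0, H.zero_mem, ?_⟩
    rw [hf0, Finsupp.sum_zero_index] at hsurp
    exact hsurp
  · obtain ⟨i₀⟩ := hι
    obtain ⟨f, hf, hsurp⟩ := hHspan (c * b i₀)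
    have hsingle : (Finsupp.single i₀ c).sum (fun i c => c * b i) = c * b i₀ :=
      Finsupp.sum_single_index (by simp)
    have hg : ∀ i, (Finsupp.single i₀ c) i ∈ A := by
      intro i
      rcases eq_or_ne i i₀ with h | h
      · simpa [h] using hc
      · rw [Finsupp.single_eq_of_ne' (Ne.symm h)]
        exact A.zero_mem
    have key := hindep f (Finsupp.single i₀ c) (fun i => hHA (hf i)) hg
      (by rwa [hsingle])
    exact ⟨f i₀, hf i₀, by simpa using key i₀⟩
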